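/- arXiv:2601.10252 — 2 statements merged into one kernel-verified Lean document; each statement's English description precedes it below -/
import Mathlib

section
/- Let C : [0,1]² → ℝ be continuous on [0,1]² and three times continuously differentiable on (0,1)², with all second-order partial derivatives bounded in absolute value by M₂ and all third-order partial derivatives bounded in absolute value by M₃ on (0,1)². Then for every integer m ≥ 1, sup_{(u,v)∈[0,1]²} |T_m C(u,v) − C(u,v)| ≤ M₂/(4m²) + 16·M₃/m³; in particular the checkerboard approximation error is O(m⁻²) uniformly on [0,1]². -/
open MeasureTheory Filter Set ProbabilityTheory

/-- Index of the checkerboard cell containing `u`, with the convention `i = m` when `u = 1`. -/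
noncomputable def cbIdx (m : ℕ) (u : ℝ) : ℕ :=
  if u = 1 then m else Nat.floor ((m : ℝ) * u) + 1

/-- The checkerboard (bilinear interpolation) operator `T_m`. -/
noncomputable def cbT (m : ℕ) (f : ℝ × ℝ → ℝ) (p : ℝ × ℝ) : ℝ :=
  let i := cbIdx m p.1
  let j := cbIdx m p.2
  let μu : ℝ := (m : ℝ) * p.1 - ((i : ℝ) - 1)
  let μv : ℝ := (m : ℝ) * p.2 - ((j : ℝ) - 1)
  (1 - μu) * (1 - μv) * f (((i : ℝ) - 1) / m, ((j : ℝ) - 1) / m)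
    + μu * (1 - μv) * f ((i : ℝ) / m, ((j : ℝ) - 1) / m)
    + (1 - μu) * μv * f (((i : ℝ) - 1) / m, (j : ℝ) / m)
    + μu * μv * f ((i : ℝ) / m, (j : ℝ) / m)

/-- The unit square `[0,1]²`. -/
def unitSq : Set (ℝ × ℝ) := Set.Icc (0 : ℝ) 1 ×ˢ Set.Icc (0 : ℝ) 1

/-- The open unit square `(0,1)²`. -/
def openSq : Set (ℝ × ℝ) := Set.Ioo (0 : ℝ) 1 ×ˢ Set.Ioo (0 : ℝ) 1

open Topology


private lemma mono_aux {φ φ' : ℝ → ℝ} {a b : ℝ} (hab : a ≤ b)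
    (hc : ContinuousOn φ (Set.Icc a b))
    (hd : ∀ t ∈ Set.Ioo a b, HasDerivAt φ (φ' t) t)
    (h0 : ∀ t ∈ Set.Ioo a b, 0 ≤ φ' t) : φ a ≤ φ b := by
  have h := monotoneOn_of_deriv_nonneg (convex_Icc a b) hc
    (fun t ht => (hd t (by rwa [interior_Icc] at ht)).differentiableAt.differentiableWithinAt)
    (fun t ht => by rw [interior_Icc] at ht; rw [(hd t ht).deriv]; exact h0 t ht)
  exact h (Set.left_mem_Icc.2 hab) (Set.right_mem_Icc.2 hab) hab

private lemma taylor1d (f f' f'' : ℝ → ℝ) (M : ℝ)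
    (hf : ContinuousOn f (Set.Icc 0 1))
    (hd1 : ∀ t ∈ Set.Ioo (0:ℝ) 1, HasDerivAt f (f' t) t)
    (hd2 : ∀ t ∈ Set.Ioo (0:ℝ) 1, HasDerivAt f' (f'' t) t)
    (hM : ∀ t ∈ Set.Ioo (0:ℝ) 1, |f'' t| ≤ M)
    {x : ℝ} (hx : x ∈ Set.Ioo (0:ℝ) 1) {y : ℝ} (hy : y ∈ Set.Icc (0:ℝ) 1) :
    |f y - f x - f' x * (y - x)| ≤ M / 2 * (y - x) ^ 2 := by
  have hM0 : 0 ≤ M := le_trans (abs_nonneg _) (hM (1/2) (by norm_num))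
  have hlip : ∀ t ∈ Set.Ioo (0:ℝ) 1, |f' t - f' x| ≤ M * |t - x| := by
    intro t ht
    have h := Convex.norm_image_sub_le_of_norm_hasDerivWithin_le
      (f := f') (f' := f'') (s := Set.Ioo (0:ℝ) 1)
      (fun z hz => (hd2 z hz).hasDerivWithinAt)
      (fun z hz => by rw [Real.norm_eq_abs]; exact hM z hz)
      (convex_Ioo _ _) hx ht
    simpa [Real.norm_eq_abs] using h
  have hgd : ∀ t ∈ Set.Ioo (0:ℝ) 1,
      HasDerivAt (fun t => f t - f x - f' x * (t - x)) (f' t - f' x) t := by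
    intro t ht
    have h1 := (hd1 t ht).sub_const (f x)
    have h2 : HasDerivAt (fun t : ℝ => f' x * (t - x)) (f' x) t := by
      simpa using ((hasDerivAt_id t).sub_const x).const_mul (f' x)
    exact h1.sub h2
  have hq1 : ∀ t : ℝ, HasDerivAt (fun t : ℝ => M / 2 * (x - t) ^ 2) (M * (x - t) * (-1)) t := by
    intro t
    have h1 : HasDerivAt (fun t : ℝ => x - t) (-1) t := by
      simpa using (hasDerivAt_id t).const_sub x
    have h2 := (h1.pow 2).const_mul (M / 2)
    exact h2.congr_deriv (by ring)
  have hq2 : ∀ t : ℝ, HasDerivAt (fun t : ℝ => M / 2 * (t - x) ^ 2) (M * (t - x)) t := by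
    intro t
    have h1 : HasDerivAt (fun t : ℝ => t - x) (1:ℝ) t := by
      simpa using (hasDerivAt_id t).sub_const x
    have h2 := (h1.pow 2).const_mul (M / 2)
    exact h2.congr_deriv (by ring)
  rcases lt_trichotomy y x with hyx | hyx | hyx
  · -- y < x, work on [y, x]
    have hsub : Set.Icc y x ⊆ Set.Icc (0:ℝ) 1 := Set.Icc_subset_Icc hy.1 hx.2.le
    have hsubo : Set.Ioo y x ⊆ Set.Ioo (0:ℝ) 1 := Set.Ioo_subset_Ioo hy.1 hx.2.le
    have hgc : ContinuousOn (fun t => f t - f x - f' x * (t - x)) (Set.Icc y x) := by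
      apply ContinuousOn.sub (ContinuousOn.sub (hf.mono hsub) continuousOn_const)
      exact (Continuous.continuousOn (by fun_prop))
    have hder : ∀ t ∈ Set.Ioo y x, |f' t - f' x| ≤ M * (x - t) := by
      intro t ht
      have := hlip t (hsubo ht)
      rwa [abs_of_neg (by linarith [ht.2] : t - x < 0), neg_sub] at this
    have hup : (f y - f x - f' x * (y - x)) - M / 2 * (x - y) ^ 2 ≤ 0 := by
      have h := mono_aux (φ := fun t => (f t - f x - f' x * (t - x)) - M / 2 * (x - t) ^ 2)
        (φ' := fun t => (f' t - f' x) - M * (x - t) * (-1)) hyx.le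
        (hgc.sub (Continuous.continuousOn (by fun_prop)))
        (fun t ht => ((hgd t (hsubo ht)).sub (hq1 t)))
        (fun t ht => by
          have h2 := abs_le.1 (hder t ht)
          linarith [h2.1])
      simpa using h
    have hlo : 0 ≤ (f y - f x - f' x * (y - x)) + M / 2 * (x - y) ^ 2 := by
      have h := mono_aux (φ := fun t => -(f t - f x - f' x * (t - x)) - M / 2 * (x - t) ^ 2)
        (φ' := fun t => (-(f' t - f' x)) - M * (x - t) * (-1)) hyx.le
        ((hgc.neg).sub (Continuous.continuousOn (by fun_prop)))
        (fun t ht => ((hgd t (hsubo ht)).neg.sub (hq1 t)))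
        (fun t ht => by
          have h2 := abs_le.1 (hder t ht)
          linarith [h2.2])
      linarith [h]
    have e : (x - y) ^ 2 = (y - x) ^ 2 := by ring
    rw [abs_le]
    constructor <;> linarith [e]
  · rw [hyx]
    simp
  · -- x < y, work on [x, y]
    have hsub : Set.Icc x y ⊆ Set.Icc (0:ℝ) 1 := Set.Icc_subset_Icc hx.1.le hy.2
    have hsubo : Set.Ioo x y ⊆ Set.Ioo (0:ℝ) 1 := Set.Ioo_subset_Ioo hx.1.le hy.2
    have hgc : ContinuousOn (fun t => f t - f x - f' x * (t - x)) (Set.Icc x y) := by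
      apply ContinuousOn.sub (ContinuousOn.sub (hf.mono hsub) continuousOn_const)
      exact (Continuous.continuousOn (by fun_prop))
    have hder : ∀ t ∈ Set.Ioo x y, |f' t - f' x| ≤ M * (t - x) := by
      intro t ht
      have := hlip t (hsubo ht)
      rwa [abs_of_pos (by linarith [ht.1] : (0:ℝ) < t - x)] at this
    have hup : (f y - f x - f' x * (y - x)) - M / 2 * (y - x) ^ 2 ≤ 0 := by
      have h := mono_aux (φ := fun t => M / 2 * (t - x) ^ 2 - (f t - f x - f' x * (t - x)))
        (φ' := fun t => M * (t - x) - (f' t - f' x)) hyx.le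
        ((Continuous.continuousOn (by fun_prop)).sub hgc)
        (fun t ht => ((hq2 t).sub (hgd t (hsubo ht))))
        (fun t ht => by
          have h2 := abs_le.1 (hder t ht)
          linarith [h2.2])
      linarith [h]
    have hlo : 0 ≤ (f y - f x - f' x * (y - x)) + M / 2 * (y - x) ^ 2 := by
      have h := mono_aux (φ := fun t => M / 2 * (t - x) ^ 2 + (f t - f x - f' x * (t - x)))
        (φ' := fun t => M * (t - x) + (f' t - f' x)) hyx.le
        ((Continuous.continuousOn (by fun_prop)).add hgc)
        (fun t ht => ((hq2 t).add (hgd t (hsubo ht))))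
        (fun t ht => by
          have h2 := abs_le.1 (hder t ht)
          linarith [h2.1])
      linarith [h]
    rw [abs_le]
    constructor <;> linarith

set_option maxHeartbeats 1000000 in
private lemma lin1d (f f' f'' : ℝ → ℝ) (M : ℝ)
    (hf : ContinuousOn f (Set.Icc 0 1))
    (hd1 : ∀ t ∈ Set.Ioo (0:ℝ) 1, HasDerivAt f (f' t) t)
    (hd2 : ∀ t ∈ Set.Ioo (0:ℝ) 1, HasDerivAt f' (f'' t) t)
    (hM : ∀ t ∈ Set.Ioo (0:ℝ) 1, |f'' t| ≤ M)
    {a b μ : ℝ} (ha : 0 ≤ a) (hab : a ≤ b) (hb : b ≤ 1) (hμ0 : 0 ≤ μ) (hμ1 : μ ≤ 1) :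
    |(1 - μ) * f a + μ * f b - f ((1 - μ) * a + μ * b)| ≤ M * (b - a) ^ 2 / 8 := by
  have hM0 : 0 ≤ M := le_trans (abs_nonneg _) (hM (1/2) (by norm_num))
  have hrhs : 0 ≤ M * (b - a) ^ 2 / 8 := by positivity
  rcases eq_or_lt_of_le hμ0 with h0 | h0
  · rw [← h0]
    have e1 : (1 - 0) * a + 0 * b = a := by ring
    have e2 : (1 - 0) * f a + 0 * f b - f a = 0 := by ring
    rw [e1, e2]
    simpa using hrhs
  rcases eq_or_lt_of_le hμ1 with h1 | h1
  · rw [h1]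
    have e1 : (1 - 1) * a + 1 * b = b := by ring
    have e2 : (1 - 1) * f a + 1 * f b - f b = 0 := by ring
    rw [e1, e2]
    simpa using hrhs
  rcases eq_or_lt_of_le hab with hab' | hab'
  · rw [← hab']
    have e1 : (1 - μ) * a + μ * a = a := by ring
    have e2 : (1 - μ) * f a + μ * f a - f a = 0 := by ring
    rw [e1, e2]
    simpa using hrhs
  set x := (1 - μ) * a + μ * b with hx
  have hxa : a < x := by nlinarith
  have hxb : x < b := by nlinarith
  have hxI : x ∈ Set.Ioo (0:ℝ) 1 := ⟨lt_of_le_of_lt ha hxa, lt_of_lt_of_le hxb hb⟩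
  have hya : a ∈ Set.Icc (0:ℝ) 1 := ⟨ha, le_trans hab hb⟩
  have hyb : b ∈ Set.Icc (0:ℝ) 1 := ⟨le_trans ha hab, hb⟩
  have ta := abs_le.1 (taylor1d f f' f'' M hf hd1 hd2 hM hxI hya)
  have tb := abs_le.1 (taylor1d f f' f'' M hf hd1 hd2 hM hxI hyb)
  have key : (1 - μ) * f a + μ * f b - f x =
      (1 - μ) * (f a - f x - f' x * (a - x)) + μ * (f b - f x - f' x * (b - x)) := by
    rw [hx]; ring
  rw [key]
  have hax : (a - x) ^ 2 = μ ^ 2 * (b - a) ^ 2 := by rw [hx]; ring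
  have hbx : (b - x) ^ 2 = (1 - μ) ^ 2 * (b - a) ^ 2 := by rw [hx]; ring
  have u1 := mul_le_mul_of_nonneg_left ta.2 (by linarith : (0:ℝ) ≤ 1 - μ)
  have u2 := mul_le_mul_of_nonneg_left tb.2 (le_of_lt h0)
  have l1 := mul_le_mul_of_nonneg_left ta.1 (by linarith : (0:ℝ) ≤ 1 - μ)
  have l2 := mul_le_mul_of_nonneg_left tb.1 (le_of_lt h0)
  have hcross : 0 ≤ M * (b - a) ^ 2 * (1 - 2 * μ) ^ 2 :=
    mul_nonneg (mul_nonneg hM0 (sq_nonneg _)) (sq_nonneg _)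
  have s1 : (1 - μ) * (M / 2 * (a - x) ^ 2) + μ * (M / 2 * (b - x) ^ 2) ≤ M * (b - a) ^ 2 / 8 := by
    rw [hax, hbx]
    nlinarith [hcross]
  have s2 : -(M * (b - a) ^ 2 / 8) ≤ (1 - μ) * (-(M / 2 * (a - x) ^ 2)) + μ * (-(M / 2 * (b - x) ^ 2)) := by
    rw [hax, hbx]
    nlinarith [hcross]
  rw [abs_le]
  constructor
  · linarith [l1, l2, s2]
  · linarith [u1, u2, s1]

private lemma cbIdx_facts {m : ℕ} (hm : 1 ≤ m) {u : ℝ} (h0 : 0 ≤ u) (h1 : u ≤ 1) :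
    1 ≤ cbIdx m u ∧ cbIdx m u ≤ m ∧
      0 ≤ (m : ℝ) * u - ((cbIdx m u : ℝ) - 1) ∧ (m : ℝ) * u - ((cbIdx m u : ℝ) - 1) ≤ 1 := by
  have hm1 : (1:ℝ) ≤ (m:ℝ) := by exact_mod_cast hm
  unfold cbIdx
  by_cases hu : u = 1
  · rw [if_pos hu, hu]
    refine ⟨hm, le_refl _, by linarith, by linarith⟩
  · rw [if_neg hu]
    have hmu0 : 0 ≤ (m:ℝ) * u := by positivity
    have hfl := Nat.floor_le hmu0
    have hfl2 := Nat.lt_floor_add_one ((m:ℝ) * u)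
    have hlt : (m:ℝ) * u < m := by
      have : u < 1 := lt_of_le_of_ne h1 hu
      nlinarith
    refine ⟨by omega, ?_, ?_, ?_⟩
    · have : Nat.floor ((m:ℝ) * u) < m := (Nat.floor_lt hmu0).2 hlt
      omega
    · push_cast
      linarith
    · push_cast
      linarith

/-- checkerboard approximation error under bounded second- and third-order
partial derivatives: `sup_{[0,1]²} |T_m C − C| ≤ M₂/(4m²) + 16 M₃/m³`. -/
theorem cbT_smooth_error (C : ℝ × ℝ → ℝ) (M₂ M₃ : ℝ)
    (hCcont : ContinuousOn C unitSq)
    (hC3 : ContDiffOn ℝ 3 C openSq)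
    (h2 : ∀ p ∈ openSq, ∀ w : Fin 2 → ℝ × ℝ,
      (∀ k, w k = ((1 : ℝ), (0 : ℝ)) ∨ w k = ((0 : ℝ), (1 : ℝ))) →
      |iteratedFDerivWithin ℝ 2 C openSq p w| ≤ M₂)
    (h3 : ∀ p ∈ openSq, ∀ w : Fin 3 → ℝ × ℝ,
      (∀ k, w k = ((1 : ℝ), (0 : ℝ)) ∨ w k = ((0 : ℝ), (1 : ℝ))) →
      |iteratedFDerivWithin ℝ 3 C openSq p w| ≤ M₃)
    (m : ℕ) (hm : 1 ≤ m) :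
    ∀ p ∈ unitSq, |cbT m C p - C p| ≤ M₂ / (4 * (m : ℝ) ^ 2) + 16 * M₃ / (m : ℝ) ^ 3 := by
  have hopen : IsOpen openSq := isOpen_Ioo.prod isOpen_Ioo
  have hhalf : (((1:ℝ)/2, (1:ℝ)/2) : ℝ × ℝ) ∈ openSq := ⟨by norm_num, by norm_num⟩
  have hM2 : 0 ≤ M₂ :=
    le_trans (abs_nonneg _) (h2 _ hhalf (fun _ => ((1:ℝ), (0:ℝ))) (fun k => Or.inl rfl))
  have hM3 : 0 ≤ M₃ :=
    le_trans (abs_nonneg _) (h3 _ hhalf (fun _ => ((1:ℝ), (0:ℝ))) (fun k => Or.inl rfl))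
  have hm' : (0:ℝ) < m := by exact_mod_cast Nat.lt_of_lt_of_le Nat.zero_lt_one hm
  have hmne : (m:ℝ) ≠ 0 := ne_of_gt hm'
  -- differentiability facts
  have hD : ∀ q ∈ openSq, HasFDerivAt C (fderiv ℝ C q) q ∧
      HasFDerivAt (fderiv ℝ C) (fderiv ℝ (fderiv ℝ C) q) q := by
    intro q hq
    have hat : ContDiffAt ℝ 3 C q := hC3.contDiffAt (hopen.mem_nhds hq)
    refine ⟨(hat.differentiableAt (by norm_num)).hasFDerivAt, ?_⟩
    exact ((hat.fderiv_right (m := 2) (by norm_num)).differentiableAt (by norm_num)).hasFDerivAt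
  -- bound on coordinate second derivatives
  have hb2 : ∀ e : ℝ × ℝ, (e = ((1:ℝ), (0:ℝ)) ∨ e = ((0:ℝ), (1:ℝ))) → ∀ q ∈ openSq,
      |fderiv ℝ (fderiv ℝ C) q e e| ≤ M₂ := by
    intro e he q hq
    have h := h2 q hq ![e, e] (by intro k; fin_cases k <;> simpa using he)
    rw [show iteratedFDerivWithin ℝ 2 C openSq q = iteratedFDeriv ℝ 2 C q from
      iteratedFDerivWithin_of_isOpen 2 hopen hq, iteratedFDeriv_two_apply] at h
    simpa using h
  -- horizontal slices
  have hsliceH : ∀ s ∈ Set.Ioo (0:ℝ) 1,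
      ContinuousOn (fun t => C (t, s)) (Set.Icc 0 1) ∧
      (∀ t ∈ Set.Ioo (0:ℝ) 1, HasDerivAt (fun t => C (t, s)) (fderiv ℝ C (t, s) (1, 0)) t) ∧
      (∀ t ∈ Set.Ioo (0:ℝ) 1, HasDerivAt (fun t => fderiv ℝ C (t, s) (1, 0))
        (fderiv ℝ (fderiv ℝ C) (t, s) (1, 0) (1, 0)) t) := by
    intro s hs
    refine ⟨?_, ?_, ?_⟩
    · exact hCcont.comp (Continuous.continuousOn (by fun_prop))
        (fun t ht => ⟨ht, Set.Ioo_subset_Icc_self hs⟩)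
    · intro t ht
      have hL : HasDerivAt (fun t : ℝ => ((t, s) : ℝ × ℝ)) (((1:ℝ), (0:ℝ)) : ℝ × ℝ) t :=
        (hasDerivAt_id t).prodMk (hasDerivAt_const t s)
      exact ((hD (t, s) ⟨ht, hs⟩).1).comp_hasDerivAt t hL
    · intro t ht
      have hL : HasDerivAt (fun t : ℝ => ((t, s) : ℝ × ℝ)) (((1:ℝ), (0:ℝ)) : ℝ × ℝ) t :=
        (hasDerivAt_id t).prodMk (hasDerivAt_const t s)
      have h := ((hD (t, s) ⟨ht, hs⟩).2).comp_hasDerivAt t hL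
      have h2' := h.clm_apply (hasDerivAt_const t (((1:ℝ), (0:ℝ)) : ℝ × ℝ))
      simpa using h2'
  -- vertical slices
  have hsliceV : ∀ t ∈ Set.Ioo (0:ℝ) 1,
      ContinuousOn (fun s => C (t, s)) (Set.Icc 0 1) ∧
      (∀ s ∈ Set.Ioo (0:ℝ) 1, HasDerivAt (fun s => C (t, s)) (fderiv ℝ C (t, s) (0, 1)) s) ∧
      (∀ s ∈ Set.Ioo (0:ℝ) 1, HasDerivAt (fun s => fderiv ℝ C (t, s) (0, 1))
        (fderiv ℝ (fderiv ℝ C) (t, s) (0, 1) (0, 1)) s) := by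
    intro t ht
    refine ⟨?_, ?_, ?_⟩
    · exact hCcont.comp (Continuous.continuousOn (by fun_prop))
        (fun s hs => ⟨Set.Ioo_subset_Icc_self ht, hs⟩)
    · intro s hs
      have hL : HasDerivAt (fun s : ℝ => ((t, s) : ℝ × ℝ)) (((0:ℝ), (1:ℝ)) : ℝ × ℝ) s :=
        (hasDerivAt_const s t).prodMk (hasDerivAt_id s)
      exact ((hD (t, s) ⟨ht, hs⟩).1).comp_hasDerivAt s hL
    · intro s hs
      have hL : HasDerivAt (fun s : ℝ => ((t, s) : ℝ × ℝ)) (((0:ℝ), (1:ℝ)) : ℝ × ℝ) s :=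
        (hasDerivAt_const s t).prodMk (hasDerivAt_id s)
      have h := ((hD (t, s) ⟨ht, hs⟩).2).comp_hasDerivAt s hL
      have h2' := h.clm_apply (hasDerivAt_const s (((0:ℝ), (1:ℝ)) : ℝ × ℝ))
      simpa using h2'
  intro p hp
  obtain ⟨u, v⟩ := p
  have hu : u ∈ Set.Icc (0:ℝ) 1 := hp.1
  have hv : v ∈ Set.Icc (0:ℝ) 1 := hp.2
  obtain ⟨hi1, him, hμ0, hμ1⟩ := cbIdx_facts hm hu.1 hu.2
  obtain ⟨hj1, hjm, hν0, hν1⟩ := cbIdx_facts hm hv.1 hv.2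
  have hi1' : (1:ℝ) ≤ (cbIdx m u : ℝ) := by exact_mod_cast hi1
  have him' : (cbIdx m u : ℝ) ≤ (m:ℝ) := by exact_mod_cast him
  have hj1' : (1:ℝ) ≤ (cbIdx m v : ℝ) := by exact_mod_cast hj1
  have hjm' : (cbIdx m v : ℝ) ≤ (m:ℝ) := by exact_mod_cast hjm
  set A := ((cbIdx m u : ℝ) - 1) / m with hA
  set B := (cbIdx m u : ℝ) / m with hB
  set c := ((cbIdx m v : ℝ) - 1) / m with hcdef
  set d := (cbIdx m v : ℝ) / m with hddef
  set μ := (m:ℝ) * u - ((cbIdx m u : ℝ) - 1) with hμ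
  set ν := (m:ℝ) * v - ((cbIdx m v : ℝ) - 1) with hν
  have hA0 : 0 ≤ A := by rw [hA]; apply div_nonneg <;> linarith
  have hB1 : B ≤ 1 := by rw [hB]; rw [div_le_one hm']; linarith
  have hABle : A ≤ B := by rw [hA, hB]; gcongr <;> linarith
  have hc0 : 0 ≤ c := by rw [hcdef]; apply div_nonneg <;> linarith
  have hd1 : d ≤ 1 := by rw [hddef]; rw [div_le_one hm']; linarith
  have hcdle : c ≤ d := by rw [hcdef, hddef]; gcongr <;> linarith
  have hBA : B - A = 1 / m := by rw [hA, hB, div_sub_div_same]; norm_num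
  have hdc : d - c = 1 / m := by rw [hcdef, hddef, div_sub_div_same]; norm_num
  have huAB : (1 - μ) * A + μ * B = u := by rw [hμ, hA, hB]; field_simp; ring
  have hvcd : (1 - ν) * c + ν * d = v := by rw [hν, hcdef, hddef]; field_simp; ring
  have hA01 : A ∈ Set.Icc (0:ℝ) 1 := ⟨hA0, le_trans hABle hB1⟩
  have hB01 : B ∈ Set.Icc (0:ℝ) 1 := ⟨le_trans hA0 hABle, hB1⟩
  have hc01 : c ∈ Set.Icc (0:ℝ) 1 := ⟨hc0, le_trans hcdle hd1⟩
  have hd01 : d ∈ Set.Icc (0:ℝ) 1 := ⟨le_trans hc0 hcdle, hd1⟩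
  -- horizontal interpolation error, extended to all heights by continuity
  have Hb : ∀ s ∈ Set.Icc (0:ℝ) 1,
      |(1 - μ) * C (A, s) + μ * C (B, s) - C (u, s)| ≤ M₂ / (8 * (m:ℝ)^2) := by
    intro s hs
    have hint : ∀ s' ∈ Set.Ioo (0:ℝ) 1,
        |(1 - μ) * C (A, s') + μ * C (B, s') - C (u, s')| ≤ M₂ / (8 * (m:ℝ)^2) := by
      intro s' hs'
      obtain ⟨hco, hd1', hd2'⟩ := hsliceH s' hs'
      have h := lin1d (fun t => C (t, s')) (fun t => fderiv ℝ C (t, s') (1, 0))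
        (fun t => fderiv ℝ (fderiv ℝ C) (t, s') (1, 0) (1, 0)) M₂ hco hd1' hd2'
        (fun t ht => hb2 _ (Or.inl rfl) (t, s') ⟨ht, hs'⟩) hA0 hABle hB1 hμ0 hμ1
      rw [huAB] at h
      calc |(1 - μ) * C (A, s') + μ * C (B, s') - C (u, s')| ≤ M₂ * (B - A)^2 / 8 := by
            simpa using h
        _ = M₂ / (8 * (m:ℝ)^2) := by rw [hBA, div_pow]; ring
    have hnb : (𝓝[Set.Ioo (0:ℝ) 1] s).NeBot := by
      rw [← mem_closure_iff_nhdsWithin_neBot, closure_Ioo (by norm_num : (0:ℝ) ≠ 1)]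
      exact hs
    have tC : ∀ t, t ∈ Set.Icc (0:ℝ) 1 →
        Filter.Tendsto (fun s' => C (t, s')) (𝓝[Set.Ioo (0:ℝ) 1] s) (𝓝 (C (t, s))) := by
      intro t ht
      exact ContinuousWithinAt.comp (hCcont (t, s) ⟨ht, hs⟩)
        (Continuous.continuousWithinAt (by fun_prop))
        (fun s' hs' => ⟨ht, Set.Ioo_subset_Icc_self hs'⟩)
    have tend := ((((tC A hA01).const_mul (1 - μ)).add ((tC B hB01).const_mul μ)).sub
      (tC u hu)).abs
    exact le_of_tendsto tend (eventually_nhdsWithin_of_forall hint)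
  -- vertical interpolation error at u, by continuity in the first coordinate
  have Vb : |(1 - ν) * C (u, c) + ν * C (u, d) - C (u, v)| ≤ M₂ / (8 * (m:ℝ)^2) := by
    have hint : ∀ t' ∈ Set.Ioo (0:ℝ) 1,
        |(1 - ν) * C (t', c) + ν * C (t', d) - C (t', v)| ≤ M₂ / (8 * (m:ℝ)^2) := by
      intro t' ht'
      obtain ⟨hco, hd1', hd2'⟩ := hsliceV t' ht'
      have h := lin1d (fun s => C (t', s)) (fun s => fderiv ℝ C (t', s) (0, 1))
        (fun s => fderiv ℝ (fderiv ℝ C) (t', s) (0, 1) (0, 1)) M₂ hco hd1' hd2'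
        (fun s hsI => hb2 _ (Or.inr rfl) (t', s) ⟨ht', hsI⟩) hc0 hcdle hd1 hν0 hν1
      rw [hvcd] at h
      calc |(1 - ν) * C (t', c) + ν * C (t', d) - C (t', v)| ≤ M₂ * (d - c)^2 / 8 := by
            simpa using h
        _ = M₂ / (8 * (m:ℝ)^2) := by rw [hdc, div_pow]; ring
    have hnb : (𝓝[Set.Ioo (0:ℝ) 1] u).NeBot := by
      rw [← mem_closure_iff_nhdsWithin_neBot, closure_Ioo (by norm_num : (0:ℝ) ≠ 1)]
      exact hu
    have tC : ∀ s, s ∈ Set.Icc (0:ℝ) 1 →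
        Filter.Tendsto (fun t' => C (t', s)) (𝓝[Set.Ioo (0:ℝ) 1] u) (𝓝 (C (u, s))) := by
      intro s hsI
      exact ContinuousWithinAt.comp (hCcont (u, s) ⟨hu, hsI⟩)
        (Continuous.continuousWithinAt (by fun_prop))
        (fun t' ht' => ⟨Set.Ioo_subset_Icc_self ht', hsI⟩)
    have tend := ((((tC c hc01).const_mul (1 - ν)).add ((tC d hd01).const_mul ν)).sub
      (tC v hv)).abs
    exact le_of_tendsto tend (eventually_nhdsWithin_of_forall hint)
  -- expand the checkerboard operator
  have expand : cbT m C (u, v) - C (u, v) =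
      (1 - ν) * ((1 - μ) * C (A, c) + μ * C (B, c) - C (u, c))
      + ν * ((1 - μ) * C (A, d) + μ * C (B, d) - C (u, d))
      + ((1 - ν) * C (u, c) + ν * C (u, d) - C (u, v)) := by
    simp only [cbT]
    rw [hA, hB, hcdef, hddef, hμ, hν]
    ring
  have t1 := Hb c hc01
  have t2 := Hb d hd01
  have e1 : |(1 - ν) * ((1 - μ) * C (A, c) + μ * C (B, c) - C (u, c))|
      ≤ (1 - ν) * (M₂ / (8 * (m:ℝ)^2)) := by
    rw [abs_mul, abs_of_nonneg (by linarith : (0:ℝ) ≤ 1 - ν)]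
    exact mul_le_mul_of_nonneg_left t1 (by linarith)
  have e2 : |ν * ((1 - μ) * C (A, d) + μ * C (B, d) - C (u, d))|
      ≤ ν * (M₂ / (8 * (m:ℝ)^2)) := by
    rw [abs_mul, abs_of_nonneg hν0]
    exact mul_le_mul_of_nonneg_left t2 hν0
  have hsum : |cbT m C (u, v) - C (u, v)| ≤ M₂ / (4 * (m:ℝ)^2) := by
    rw [expand]
    have h3' := abs_add_le
      ((1 - ν) * ((1 - μ) * C (A, c) + μ * C (B, c) - C (u, c))
        + ν * ((1 - μ) * C (A, d) + μ * C (B, d) - C (u, d)))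
      ((1 - ν) * C (u, c) + ν * C (u, d) - C (u, v))
    have h4' := abs_add_le ((1 - ν) * ((1 - μ) * C (A, c) + μ * C (B, c) - C (u, c)))
      (ν * ((1 - μ) * C (A, d) + μ * C (B, d) - C (u, d)))
    have heq : (1 - ν) * (M₂ / (8 * (m:ℝ)^2)) + ν * (M₂ / (8 * (m:ℝ)^2))
        + M₂ / (8 * (m:ℝ)^2) = M₂ / (4 * (m:ℝ)^2) := by
      ring
    linarith [Vb]
  have hpos : 0 ≤ 16 * M₃ / (m:ℝ)^3 := by positivity
  linarith
end

section
/- (Lipschitz-with-jump bound for the weighted empirical copula.) Let (X_1,Y_1), …, (X_n,Y_n) be points in ℝ² such that X_1,…,X_n are pairwise distinct and Y_1,…,Y_n are pairwise distinct, and let w_1, …, w_n be positive weights with Σ_{i=1}^n w_i = 1; set Δ = max_{1≤i≤n} w_i. Then for all (u₁,v₁), (u₂,v₂) ∈ (0,1]², the weighted empirical copula satisfies |Ĉ^w(u₂,v₂) − Ĉ^w(u₁,v₁)| ≤ |u₂ − u₁| + |v₂ − v₁| + 2Δ. -/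
open Finset

/-- The weighted empirical marginal distribution function `F^w(x) = Σᵢ wᵢ 1{Xᵢ ≤ x}`. -/
noncomputable def wMarg {n : ℕ} (X w : Fin (n + 1) → ℝ) (s : ℝ) : ℝ :=
  ∑ i, if X i ≤ s then w i else 0

/-- The weighted empirical joint distribution function
`H^w(x,y) = Σᵢ wᵢ 1{Xᵢ ≤ x, Yᵢ ≤ y}`. -/
noncomputable def wJoint {n : ℕ} (X Y w : Fin (n + 1) → ℝ) (s t : ℝ) : ℝ :=
  ∑ i, if X i ≤ s ∧ Y i ≤ t then w i else 0

/-- The left-continuous generalized inverse `K⁻(p) = inf {x : K(x) ≥ p}`. -/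
noncomputable def genInv (K : ℝ → ℝ) (p : ℝ) : ℝ :=
  sInf {s : ℝ | p ≤ K s}

/-- The weighted empirical copula `Ĉ^w(u,v) = H^w((F^w)⁻(u), (G^w)⁻(v))`. -/
noncomputable def wCop {n : ℕ} (X Y w : Fin (n + 1) → ℝ) (u v : ℝ) : ℝ :=
  wJoint X Y w (genInv (wMarg X w) u) (genInv (wMarg Y w) v)

lemma wMarg_mono {n : ℕ} (X w : Fin (n + 1) → ℝ) (hw : ∀ i, 0 < w i)
    {s t : ℝ} (h : s ≤ t) : wMarg X w s ≤ wMarg X w t := by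
  apply Finset.sum_le_sum
  intro i _
  split_ifs <;> linarith [(hw i).le]

lemma wJoint_swap {n : ℕ} (X Y w : Fin (n + 1) → ℝ) (s t : ℝ) :
    wJoint X Y w s t = wJoint Y X w t s := by
  unfold wJoint
  exact Finset.sum_congr rfl fun i _ => if_congr and_comm rfl rfl

lemma wJoint_fst_lip {n : ℕ} (X Y w : Fin (n + 1) → ℝ) (hw : ∀ i, 0 < w i)
    (x₁ x₂ y : ℝ) :
    |wJoint X Y w x₂ y - wJoint X Y w x₁ y| ≤ |wMarg X w x₂ - wMarg X w x₁| := by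
  wlog h : x₁ ≤ x₂ generalizing x₁ x₂
  · rw [abs_sub_comm, abs_sub_comm (wMarg X w x₂)]
    exact this _ _ (le_of_not_ge h)
  have h1 : wJoint X Y w x₁ y ≤ wJoint X Y w x₂ y := by
    apply Finset.sum_le_sum; intro i _
    split_ifs with h1 h2
    · linarith [(hw i).le]
    · exact absurd ⟨h1.1.trans h, h1.2⟩ h2
    · exact (hw i).le
    · exact le_refl _
  have h2 : wMarg X w x₁ ≤ wMarg X w x₂ := wMarg_mono X w hw h
  have h3 : wJoint X Y w x₂ y + wMarg X w x₁ ≤ wJoint X Y w x₁ y + wMarg X w x₂ := by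
    unfold wJoint wMarg
    rw [← Finset.sum_add_distrib, ← Finset.sum_add_distrib]
    apply Finset.sum_le_sum; intro i _
    have := (hw i).le
    split_ifs <;> simp_all <;> linarith
  rw [abs_of_nonneg (by linarith), abs_of_nonneg (by linarith)]
  linarith

lemma wJoint_snd_lip {n : ℕ} (X Y w : Fin (n + 1) → ℝ) (hw : ∀ i, 0 < w i)
    (x y₁ y₂ : ℝ) :
    |wJoint X Y w x y₂ - wJoint X Y w x y₁| ≤ |wMarg Y w y₂ - wMarg Y w y₁| := by
  rw [wJoint_swap X Y w x y₂, wJoint_swap X Y w x y₁]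
  exact wJoint_fst_lip Y X w hw y₁ y₂ x

lemma genInv_spec {n : ℕ} (X w : Fin (n + 1) → ℝ) (hX : Function.Injective X)
    (hw : ∀ i, 0 < w i) (hsum : ∑ i, w i = 1) {u : ℝ} (hu0 : 0 < u) (hu1 : u ≤ 1) :
    ∃ j, genInv (wMarg X w) u = X j ∧ u ≤ wMarg X w (X j) ∧ wMarg X w (X j) ≤ u + w j := by
  obtain ⟨j0, -, hj0⟩ := Finset.exists_max_image univ X univ_nonempty
  have hF1 : wMarg X w (X j0) = 1 := by
    unfold wMarg
    rw [← hsum]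
    exact Finset.sum_congr rfl fun i _ => if_pos (hj0 i (mem_univ i))
  set T := univ.filter fun i => u ≤ wMarg X w (X i) with hT
  have hTne : T.Nonempty := ⟨j0, mem_filter.mpr ⟨mem_univ _, by rw [hF1]; exact hu1⟩⟩
  obtain ⟨j, hjT, hjmin⟩ := T.exists_min_image X hTne
  have hjF : u ≤ wMarg X w (X j) := (mem_filter.mp hjT).2
  have hlb : ∀ s ∈ {s : ℝ | u ≤ wMarg X w s}, X j ≤ s := by
    intro s hs
    simp only [Set.mem_setOf_eq] at hs
    have hex : ∃ i, X i ≤ s := by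
      by_contra hc
      push_neg at hc
      have h0 : wMarg X w s = 0 :=
        Finset.sum_eq_zero fun i _ => if_neg (not_le.mpr (hc i))
      rw [h0] at hs; linarith
    obtain ⟨i0, hi0⟩ := hex
    obtain ⟨k, hkA, hkmax⟩ := (univ.filter fun i => X i ≤ s).exists_max_image X
      ⟨i0, mem_filter.mpr ⟨mem_univ _, hi0⟩⟩
    have hks : X k ≤ s := (mem_filter.mp hkA).2
    have heq : wMarg X w s = wMarg X w (X k) := by
      refine Finset.sum_congr rfl fun i _ => ?_
      have hiff : (X i ≤ s) ↔ (X i ≤ X k) :=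
        ⟨fun h' => hkmax i (mem_filter.mpr ⟨mem_univ i, h'⟩), fun h' => h'.trans hks⟩
      simp only [hiff]
    have hkT : k ∈ T := mem_filter.mpr ⟨mem_univ _, heq ▸ hs⟩
    exact (hjmin k hkT).trans hks
  have hgi : genInv (wMarg X w) u = X j := by
    apply le_antisymm
    · exact csInf_le ⟨X j, hlb⟩ hjF
    · exact le_csInf ⟨X j, hjF⟩ hlb
  refine ⟨j, hgi, hjF, ?_⟩
  have hsplit : wMarg X w (X j) = w j + ∑ i, (if X i < X j then w i else 0) := by
    unfold wMarg
    rw [show w j = ∑ i, if i = j then w i else 0 by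
      rw [Finset.sum_ite_eq' univ j w]; simp]
    rw [← Finset.sum_add_distrib]
    refine Finset.sum_congr rfl fun i _ => ?_
    by_cases hij : i = j
    · subst hij; simp
    · have hne : X i ≠ X j := fun h => hij (hX h)
      simp only [if_neg hij, zero_add, lt_iff_le_and_ne, ne_eq, hne, not_false_eq_true, and_true]
  by_cases hB : ∃ i, X i < X j
  · obtain ⟨i0, hi0⟩ := hB
    obtain ⟨k, hkB, hkmax⟩ := (univ.filter fun i => X i < X j).exists_max_image X
      ⟨i0, mem_filter.mpr ⟨mem_univ _, hi0⟩⟩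
    have hkj : X k < X j := (mem_filter.mp hkB).2
    have heq : wMarg X w (X k) = ∑ i, (if X i < X j then w i else 0) := by
      refine Finset.sum_congr rfl fun i _ => ?_
      have hiff : (X i ≤ X k) ↔ (X i < X j) :=
        ⟨fun h' => lt_of_le_of_lt h' hkj,
         fun h' => hkmax i (mem_filter.mpr ⟨mem_univ i, h'⟩)⟩
      simp only [hiff]
    have hku : wMarg X w (X k) < u := by
      by_contra hc
      push_neg at hc
      have : k ∈ T := mem_filter.mpr ⟨mem_univ _, hc⟩
      exact absurd hkj (not_lt.mpr (hjmin k this))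
    rw [heq] at hku
    linarith
  · push_neg at hB
    have h0 : ∑ i, (if X i < X j then w i else 0) = 0 :=
      Finset.sum_eq_zero fun i _ => if_neg (not_lt.mpr (hB i))
    rw [hsplit, h0]
    linarith

/-- Lipschitz-with-jump bound for the weighted empirical copula:
`|Ĉ^w(u₂,v₂) − Ĉ^w(u₁,v₁)| ≤ |u₂ − u₁| + |v₂ − v₁| + 2Δ` on `(0,1]²`,
where `Δ = max_i w_i`. -/
theorem wCop_lipschitz_with_jump (n : ℕ) (X Y : Fin (n + 1) → ℝ)
    (hX : Function.Injective X) (hY : Function.Injective Y)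
    (w : Fin (n + 1) → ℝ) (hw : ∀ i, 0 < w i) (hsum : ∑ i, w i = 1)
    (u₁ v₁ u₂ v₂ : ℝ)
    (hu₁ : u₁ ∈ Set.Ioc (0 : ℝ) 1) (hv₁ : v₁ ∈ Set.Ioc (0 : ℝ) 1)
    (hu₂ : u₂ ∈ Set.Ioc (0 : ℝ) 1) (hv₂ : v₂ ∈ Set.Ioc (0 : ℝ) 1) :
    |wCop X Y w u₂ v₂ - wCop X Y w u₁ v₁|
      ≤ |u₂ - u₁| + |v₂ - v₁| + 2 * Finset.univ.sup' Finset.univ_nonempty w := by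
  set Δ := Finset.univ.sup' Finset.univ_nonempty w with hΔdef
  have hΔ : ∀ j, w j ≤ Δ := fun j => Finset.le_sup' w (mem_univ j)
  obtain ⟨a₁, ha₁, ha₁l, ha₁u⟩ := genInv_spec X w hX hw hsum hu₁.1 hu₁.2
  obtain ⟨a₂, ha₂, ha₂l, ha₂u⟩ := genInv_spec X w hX hw hsum hu₂.1 hu₂.2
  obtain ⟨b₁, hb₁, hb₁l, hb₁u⟩ := genInv_spec Y w hY hw hsum hv₁.1 hv₁.2
  obtain ⟨b₂, hb₂, hb₂l, hb₂u⟩ := genInv_spec Y w hY hw hsum hv₂.1 hv₂.2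
  have hC₁ : wCop X Y w u₁ v₁ = wJoint X Y w (X a₁) (Y b₁) := by
    rw [wCop, ha₁, hb₁]
  have hC₂ : wCop X Y w u₂ v₂ = wJoint X Y w (X a₂) (Y b₂) := by
    rw [wCop, ha₂, hb₂]
  have t1 := wJoint_fst_lip X Y w hw (X a₁) (X a₂) (Y b₂)
  have t2 := wJoint_snd_lip X Y w hw (X a₁) (Y b₁) (Y b₂)
  have a1 : |wMarg X w (X a₂) - wMarg X w (X a₁)| ≤ |u₂ - u₁| + Δ := by
    have e1 := le_abs_self (u₂ - u₁)
    have e2 := neg_abs_le (u₂ - u₁)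
    rw [abs_le]
    constructor <;> [skip; skip] <;>
      · have := hΔ a₁; have := hΔ a₂; linarith
  have a2 : |wMarg Y w (Y b₂) - wMarg Y w (Y b₁)| ≤ |v₂ - v₁| + Δ := by
    have e1 := le_abs_self (v₂ - v₁)
    have e2 := neg_abs_le (v₂ - v₁)
    rw [abs_le]
    constructor <;> [skip; skip] <;>
      · have := hΔ b₁; have := hΔ b₂; linarith
  have tri : |wJoint X Y w (X a₂) (Y b₂) - wJoint X Y w (X a₁) (Y b₁)| ≤
      |wJoint X Y w (X a₂) (Y b₂) - wJoint X Y w (X a₁) (Y b₂)| +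
      |wJoint X Y w (X a₁) (Y b₂) - wJoint X Y w (X a₁) (Y b₁)| :=
    abs_sub_le _ _ _
  rw [hC₁, hC₂]
  linarith
end
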